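/- Let X, Y be i.i.d. exponential random variables with rate 1. Then P(XY < a) = 1 - a ∫_2^∞ e^{-√a · s} √(s² - 4) ds for every a > 0. -/

import Mathlib

open MeasureTheory ProbabilityTheory Real

namespace ProdExpAux

open Set Filter Topology


noncomputable def w (s : ℝ) : ℝ := Real.sqrt (s^2 - 4)

lemma w_sq {s : ℝ} (hs : 2 < s) : w s ^ 2 = s^2 - 4 := by
  rw [w, sq_sqrt]; nlinarith

lemma w_lt {s : ℝ} (hs : 2 < s) : w s < s := by
  have h1 : s^2 - 4 < s^2 := by nlinarith
  have := Real.sqrt_lt_sqrt (by nlinarith : (0:ℝ) ≤ s^2 - 4) h1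
  rwa [Real.sqrt_sq (by linarith : (0:ℝ) ≤ s)] at this

lemma w_pos {s : ℝ} (hs : 2 < s) : 0 < w s := by
  apply Real.sqrt_pos.mpr; nlinarith

lemma hasDerivAt_w {s : ℝ} (hs : 2 < s) : HasDerivAt w (s / w s) s := by
  have h1 : HasDerivAt (fun s : ℝ => s^2 - 4) (2*s) s := by
    simpa using (hasDerivAt_pow 2 s).sub_const 4
  have h2 := (Real.hasDerivAt_sqrt (by nlinarith : s^2 - 4 ≠ 0)).comp s h1
  refine h2.congr_deriv ?_
  have hw := (w_pos hs).ne'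
  simp only [w] at hw ⊢
  field_simp

noncomputable def phi (b s : ℝ) : ℝ := b/2 * (s + w s)
noncomputable def psi (b s : ℝ) : ℝ := b/2 * (s - w s)

lemma phi_add_psi (b s : ℝ) : phi b s + psi b s = b * s := by
  simp [phi, psi]; ring

lemma phi_mul_psi {s : ℝ} (b : ℝ) (hs : 2 < s) : phi b s * psi b s = b^2 := by
  have := w_sq hs
  simp only [phi, psi]; nlinarith

lemma phi_gt {b s : ℝ} (hb : 0 < b) (hs : 2 < s) : b < phi b s := by
  have := w_pos hs
  simp only [phi]; nlinarith

lemma psi_pos {b s : ℝ} (hb : 0 < b) (hs : 2 < s) : 0 < psi b s := by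
  have := w_lt hs
  simp only [psi]; nlinarith

lemma psi_lt {b s : ℝ} (hb : 0 < b) (hs : 2 < s) : psi b s < b := by
  have h : s - 2 < w s := by
    rw [w]
    apply (Real.lt_sqrt (by linarith : (0:ℝ) ≤ s - 2)).mpr
    nlinarith
  simp only [psi]; nlinarith

lemma s_of_x {b x : ℝ} (hb : 0 < b) (hx : 0 < x) (hxb : x ≠ b) : 2 < x/b + b/x := by
  have h : x/b + b/x - 2 = (x-b)^2/(b*x) := by field_simp; ring
  have h2 : 0 < (x-b)^2/(b*x) := by
    apply div_pos _ (by positivity)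
    exact lt_of_le_of_ne (sq_nonneg _) (Ne.symm (pow_ne_zero 2 (sub_ne_zero.mpr hxb)))
  linarith

lemma w_s_of_x {b x : ℝ} (hb : 0 < b) (hx : 0 < x) :
    w (x/b + b/x) = |x/b - b/x| := by
  rw [w, show (x/b + b/x)^2 - 4 = (x/b - b/x)^2 by field_simp; ring, Real.sqrt_sq_eq_abs]

lemma phi_image (hb : 0 < b) : phi b '' Ioi 2 = Ioi b := by
  ext x
  simp only [mem_image, mem_Ioi]
  constructor
  · rintro ⟨s, hs, rfl⟩; exact phi_gt hb hs
  · intro hx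
    have hx0 : 0 < x := hb.trans hx
    refine ⟨x/b + b/x, s_of_x hb hx0 hx.ne', ?_⟩
    have hge : b/x ≤ x/b := by
      rw [div_le_div_iff₀ hx0 hb]; nlinarith
    rw [phi, w_s_of_x hb hx0, abs_of_nonneg (by linarith)]
    field_simp
    ring

lemma psi_image (hb : 0 < b) : psi b '' Ioi 2 = Ioo 0 b := by
  ext x
  simp only [mem_image, mem_Ioi, mem_Ioo]
  constructor
  · rintro ⟨s, hs, rfl⟩; exact ⟨psi_pos hb hs, psi_lt hb hs⟩
  · rintro ⟨hx0, hxb⟩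
    refine ⟨x/b + b/x, s_of_x hb hx0 hxb.ne, ?_⟩
    have hge : x/b ≤ b/x := by
      rw [div_le_div_iff₀ hb hx0]; nlinarith
    rw [psi, w_s_of_x hb hx0, abs_of_nonpos (by linarith)]
    field_simp
    ring

lemma phi_injOn (hb : 0 < b) : InjOn (phi b) (Ioi 2) := by
  have : StrictMonoOn (phi b) (Ioi 2) := by
    intro s hs t ht hst
    simp only [mem_Ioi] at hs ht
    have : w s < w t := by
      rw [w, w]
      apply Real.sqrt_lt_sqrt (by nlinarith)
      nlinarith
    simp only [phi]; nlinarith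
  exact this.injOn

lemma psi_injOn (hb : 0 < b) : InjOn (psi b) (Ioi 2) := by
  intro s hs t ht h
  have h1 : phi b s * psi b s = phi b t * psi b t := by
    rw [phi_mul_psi b hs, phi_mul_psi b ht]
  rw [h] at h1
  exact phi_injOn hb hs ht (mul_right_cancel₀ (psi_pos hb ht).ne' h1)

lemma hasDerivAt_phi {b s : ℝ} (hs : 2 < s) :
    HasDerivAt (phi b) (b/2 * (1 + s / w s)) s := by
  exact ((hasDerivAt_id s).add (hasDerivAt_w hs)).const_mul (b/2)

lemma hasDerivAt_psi {b s : ℝ} (hs : 2 < s) :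
    HasDerivAt (psi b) (b/2 * (1 - s / w s)) s := by
  exact ((hasDerivAt_id s).sub (hasDerivAt_w hs)).const_mul (b/2)

lemma one_lt_div_w {s : ℝ} (hs : 2 < s) : 1 < s / w s :=
  (one_lt_div (w_pos hs)).mpr (w_lt hs)

section Integrals

variable {b : ℝ}

lemma g_integrableOn (hb : 0 < b) :
    IntegrableOn (fun x => Real.exp (-(x + b^2/x))) (Ioi (0:ℝ)) := by
  have hc : ContinuousOn (fun x : ℝ => Real.exp (-(x + b^2/x))) (Ioi 0) := by
    apply Real.continuous_exp.comp_continuousOn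
    exact (continuousOn_id.add (continuousOn_const.div continuousOn_id
      fun x hx => ne_of_gt hx)).neg
  apply Integrable.mono (exp_neg_integrableOn_Ioi 0 one_pos)
    (hc.aestronglyMeasurable measurableSet_Ioi)
  filter_upwards [ae_restrict_mem measurableSet_Ioi] with x hx
  rw [Real.norm_eq_abs, Real.norm_eq_abs, abs_of_pos (exp_pos _), abs_of_pos (exp_pos _)]
  apply Real.exp_le_exp.mpr
  have : 0 < b^2/x := div_pos (by positivity) hx
  nlinarith

lemma phi_arg (hb : 0 < b) {s : ℝ} (hs : 2 < s) :
    phi b s + b^2 / phi b s = b * s := by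
  have h1 := phi_mul_psi b hs
  have h2 := phi_add_psi b s
  have hne : phi b s ≠ 0 := (hb.trans (phi_gt hb hs)).ne'
  have : b^2 / phi b s = psi b s := by
    rw [← h1, mul_comm, mul_div_assoc, div_self hne, mul_one]
  rw [this, h2]

lemma psi_arg (hb : 0 < b) {s : ℝ} (hs : 2 < s) :
    psi b s + b^2 / psi b s = b * s := by
  have h1 := phi_mul_psi b hs
  have h2 := phi_add_psi b s
  have hne : psi b s ≠ 0 := (psi_pos hb hs).ne'
  have : b^2 / psi b s = phi b s := by
    rw [← h1, mul_div_assoc, div_self hne, mul_one]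
  rw [this]; linarith

lemma cov_phi (hb : 0 < b) :
    ∫ x in Ioi b, Real.exp (-(x + b^2/x)) =
      ∫ s in Ioi (2:ℝ), |b/2 * (1 + s / w s)| * Real.exp (-(b*s)) := by
  rw [← phi_image hb, integral_image_eq_integral_abs_deriv_smul measurableSet_Ioi
      (fun s hs => (hasDerivAt_phi (mem_Ioi.mp hs)).hasDerivWithinAt) (phi_injOn hb)]
  apply setIntegral_congr_fun measurableSet_Ioi
  intro s hs
  simp only [smul_eq_mul]
  rw [phi_arg hb (mem_Ioi.mp hs)]

lemma cov_psi (hb : 0 < b) :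
    ∫ x in Ioo 0 b, Real.exp (-(x + b^2/x)) =
      ∫ s in Ioi (2:ℝ), |b/2 * (1 - s / w s)| * Real.exp (-(b*s)) := by
  rw [← psi_image hb, integral_image_eq_integral_abs_deriv_smul measurableSet_Ioi
      (fun s hs => (hasDerivAt_psi (mem_Ioi.mp hs)).hasDerivWithinAt) (psi_injOn hb)]
  apply setIntegral_congr_fun measurableSet_Ioi
  intro s hs
  simp only [smul_eq_mul]
  rw [psi_arg hb (mem_Ioi.mp hs)]

lemma int_phi (hb : 0 < b) :
    IntegrableOn (fun s => |b/2 * (1 + s / w s)| * Real.exp (-(b*s))) (Ioi (2:ℝ)) := by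
  have h := (integrableOn_image_iff_integrableOn_abs_deriv_smul measurableSet_Ioi
      (fun s hs => (hasDerivAt_phi (hs := mem_Ioi.mp hs) (b := b)).hasDerivWithinAt)
      (phi_injOn hb) (fun x => Real.exp (-(x + b^2/x)))).mp
    (by rw [phi_image hb]
        exact (g_integrableOn hb).mono_set (Ioi_subset_Ioi hb.le))
  apply h.congr_fun _ measurableSet_Ioi
  intro s hs
  simp only [smul_eq_mul]
  rw [phi_arg hb (mem_Ioi.mp hs)]

lemma int_psi (hb : 0 < b) :
    IntegrableOn (fun s => |b/2 * (1 - s / w s)| * Real.exp (-(b*s))) (Ioi (2:ℝ)) := by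
  have h := (integrableOn_image_iff_integrableOn_abs_deriv_smul measurableSet_Ioi
      (fun s hs => (hasDerivAt_psi (hs := mem_Ioi.mp hs) (b := b)).hasDerivWithinAt)
      (psi_injOn hb) (fun x => Real.exp (-(x + b^2/x)))).mp
    (by rw [psi_image hb]
        exact (g_integrableOn hb).mono_set Ioo_subset_Ioi_self)
  apply h.congr_fun _ measurableSet_Ioi
  intro s hs
  simp only [smul_eq_mul]
  rw [psi_arg hb (mem_Ioi.mp hs)]

lemma abs_sum (hb : 0 < b) {s : ℝ} (hs : 2 < s) :
    |b/2 * (1 + s / w s)| + |b/2 * (1 - s / w s)| = b * (s / w s) := by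
  have h := one_lt_div_w hs
  rw [abs_of_pos (by nlinarith), abs_of_neg (by nlinarith)]
  ring

lemma h1_integrableOn (hb : 0 < b) :
    IntegrableOn (fun s => Real.exp (-(b*s)) * (s / w s)) (Ioi (2:ℝ)) := by
  apply IntegrableOn.congr_fun (((int_phi hb).add (int_psi hb)).const_mul (1/b)) _
    measurableSet_Ioi
  intro s hs
  simp only [Pi.add_apply]
  rw [abs_of_pos, abs_of_neg]
  · field_simp
    ring
  · have h := one_lt_div_w (mem_Ioi.mp hs); nlinarith
  · have h := one_lt_div_w (mem_Ioi.mp hs); nlinarith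

lemma F_bound (hb : 0 < b) {s : ℝ} (hs : 2 < s) :
    Real.exp (-(b*s)) * w s ≤ 2/b * Real.exp (-(b/2*s)) := by
  have h1 : w s ≤ s := (w_lt hs).le
  have h2 : s ≤ 2/b * Real.exp (b/2*s) := by
    rw [div_mul_eq_mul_div, le_div_iff₀ hb]
    nlinarith [Real.add_one_le_exp (b/2*s), Real.exp_pos (b/2*s)]
  calc Real.exp (-(b*s)) * w s ≤ Real.exp (-(b*s)) * (2/b * Real.exp (b/2*s)) :=
        mul_le_mul_of_nonneg_left (h1.trans h2) (Real.exp_pos _).le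
    _ = 2/b * Real.exp (-(b/2*s)) := by
        rw [show -(b/2*s) = -(b*s) + b/2*s by ring, Real.exp_add]; ring

lemma F_integrableOn (hb : 0 < b) :
    IntegrableOn (fun s => Real.exp (-(b*s)) * w s) (Ioi (2:ℝ)) := by
  have hcont : Continuous (fun s : ℝ => Real.exp (-(b*s)) * w s) := by
    apply Continuous.mul
    · exact Real.continuous_exp.comp (continuous_const.mul continuous_id).neg
    · exact Real.continuous_sqrt.comp (by continuity)
  have hint : IntegrableOn (fun s : ℝ => 2/b * Real.exp (-(b/2*s))) (Ioi (2:ℝ)) := by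
    apply Integrable.const_mul
    have := exp_neg_integrableOn_Ioi 2 (half_pos hb)
    apply this.congr_fun _ measurableSet_Ioi
    intro s _
    simp [neg_mul]
  apply Integrable.mono hint hcont.aestronglyMeasurable.restrict
  filter_upwards [ae_restrict_mem measurableSet_Ioi] with s hs
  rw [Real.norm_eq_abs, Real.norm_eq_abs,
    abs_of_nonneg (mul_nonneg (Real.exp_pos _).le (Real.sqrt_nonneg _) :
      (0:ℝ) ≤ Real.exp (-(b*s)) * w s),
    abs_of_nonneg (by positivity)]
  exact F_bound hb (mem_Ioi.mp hs)

lemma F_tendsto (hb : 0 < b) :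
    Tendsto (fun s => Real.exp (-(b*s)) * w s) atTop (nhds 0) := by
  apply squeeze_zero' (Filter.Eventually.of_forall fun s =>
    mul_nonneg (Real.exp_pos _).le (Real.sqrt_nonneg _))
  · filter_upwards [Filter.eventually_gt_atTop (2:ℝ)] with s hs
    exact F_bound hb hs
  · have h : Tendsto (fun s : ℝ => b/2*s) atTop atTop :=
      Tendsto.const_mul_atTop (half_pos hb) tendsto_id
    have := Real.tendsto_exp_neg_atTop_nhds_zero.comp h
    simpa using this.const_mul (2/b)

lemma ftc (hb : 0 < b) :
    ∫ s in Ioi (2:ℝ),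
      (Real.exp (-(b*s)) * (s / w s) - b * (Real.exp (-(b*s)) * w s)) = 0 := by
  have hderiv : ∀ s ∈ Ioi (2:ℝ), HasDerivAt (fun s => Real.exp (-(b*s)) * w s)
      (Real.exp (-(b*s)) * (s / w s) - b * (Real.exp (-(b*s)) * w s)) s := by
    intro s hs
    have he : HasDerivAt (fun s : ℝ => Real.exp (-(b*s))) (Real.exp (-(b*s)) * -b) s := by
      simpa using (((hasDerivAt_id s).const_mul b).neg).exp
    have := he.mul (hasDerivAt_w (mem_Ioi.mp hs))
    refine this.congr_deriv ?_
    ring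
  have hcont : ContinuousWithinAt (fun s => Real.exp (-(b*s)) * w s) (Ici 2) 2 := by
    apply Continuous.continuousWithinAt
    exact (Real.continuous_exp.comp (continuous_const.mul continuous_id).neg).mul
      (Real.continuous_sqrt.comp (by continuity))
  have hint := (h1_integrableOn hb).sub ((F_integrableOn hb).const_mul b)
  have h := integral_Ioi_of_hasDerivAt_of_tendsto hcont hderiv hint (F_tendsto hb)
  rw [h]
  have : w 2 = 0 := by norm_num [w]
  rw [this]
  ring

lemma keyA (hb : 0 < b) :
    ∫ x in Ioi (0:ℝ), Real.exp (-(x + b^2/x)) =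
      b^2 * ∫ s in Ioi (2:ℝ), Real.exp (-(b*s)) * Real.sqrt (s^2 - 4) := by
  have hsplit : ∫ x in Ioi (0:ℝ), Real.exp (-(x + b^2/x)) =
      (∫ x in Ioo 0 b, Real.exp (-(x + b^2/x))) +
        ∫ x in Ioi b, Real.exp (-(x + b^2/x)) := by
    have hu := setIntegral_union (μ := volume) (s := Ioo 0 b) (t := Ici b)
      (f := fun x : ℝ => Real.exp (-(x + b^2/x)))
      (Set.disjoint_left.mpr fun x hx hx2 => absurd hx2 (not_le.mpr hx.2))
      measurableSet_Ici
      ((g_integrableOn hb).mono_set Ioo_subset_Ioi_self)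
      ((g_integrableOn hb).mono_set fun x hx => lt_of_lt_of_le hb hx)
    rw [Ioo_union_Ici_eq_Ioi hb] at hu
    rw [hu, integral_Ici_eq_integral_Ioi]
  rw [hsplit, cov_phi hb, cov_psi hb, ← integral_add (int_psi hb) (int_phi hb)]
  have hstep : ∫ s in Ioi (2:ℝ),
      (|b/2 * (1 - s / w s)| * Real.exp (-(b*s)) + |b/2 * (1 + s / w s)| * Real.exp (-(b*s))) =
      ∫ s in Ioi (2:ℝ), b * (Real.exp (-(b*s)) * (s / w s)) := by
    apply setIntegral_congr_fun measurableSet_Ioi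
    intro s hs
    have h := one_lt_div_w (mem_Ioi.mp hs)
    dsimp only
    rw [abs_of_neg (by nlinarith), abs_of_pos (by nlinarith)]
    ring
  rw [hstep, integral_const_mul]
  have hAB : ∫ s in Ioi (2:ℝ), Real.exp (-(b*s)) * (s / w s) =
      b * ∫ s in Ioi (2:ℝ), Real.exp (-(b*s)) * w s := by
    have h0 := ftc hb
    rw [integral_sub (h1_integrableOn hb) ((F_integrableOn hb).const_mul b),
      integral_const_mul] at h0
    linarith
  rw [hAB]
  simp only [w]
  ring

end Integrals

section MeasureSide

open ProbabilityTheory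

lemma gammaPDF_one_one {x : ℝ} (hx : 0 ≤ x) :
    gammaPDF 1 1 x = ENNReal.ofReal (Real.exp (-x)) := by
  rw [gammaPDF_of_nonneg hx]
  norm_num [Real.Gamma_one, Real.rpow_zero, Real.one_rpow]

lemma expMeasure_Ici {c : ℝ} (hc : 0 ≤ c) :
    expMeasure 1 (Ici c) = ENNReal.ofReal (Real.exp (-c)) := by
  rw [expMeasure, gammaMeasure, withDensity_apply _ measurableSet_Ici]
  rw [setLIntegral_congr_fun measurableSet_Ici
    (fun x (hx : x ∈ Ici c) => gammaPDF_one_one (hc.trans hx))]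
  rw [← ofReal_integral_eq_lintegral_ofReal
    ((integrableOn_Ici_iff_integrableOn_Ioi).mpr
      ((exp_neg_integrableOn_Ioi c one_pos).congr_fun (fun x _ => by simp) measurableSet_Ioi))
    (ae_of_all _ fun x => (Real.exp_pos _).le)]
  rw [integral_Ici_eq_integral_Ioi, integral_exp_neg_Ioi]

lemma expMeasure_Iio_zero : expMeasure 1 (Iio 0) = 0 := by
  rw [expMeasure, gammaMeasure, withDensity_apply _ measurableSet_Iio]
  exact lintegral_gammaPDF_of_nonpos le_rfl

lemma tail_eq {b : ℝ} (hb : 0 < b) (x : ℝ) :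
    expMeasure 1 {y | b^2 ≤ x * y} =
      if 0 < x then ENNReal.ofReal (Real.exp (-(b^2/x))) else 0 := by
  have hb2 : 0 < b^2 := by positivity
  by_cases hx : 0 < x
  · rw [if_pos hx]
    have hset : {y | b^2 ≤ x * y} = Ici (b^2/x) := by
      ext y
      simp only [mem_setOf_eq, mem_Ici]
      rw [div_le_iff₀ hx]
      constructor <;> intro h <;> nlinarith
    rw [hset, expMeasure_Ici (le_of_lt (div_pos hb2 hx))]
  · rw [if_neg hx]
    push_neg at hx
    have hsub : {y | b^2 ≤ x * y} ⊆ Iio 0 := by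
      intro y hy
      simp only [mem_setOf_eq] at hy
      simp only [mem_Iio]
      by_contra h
      push_neg at h
      nlinarith [mul_nonpos_of_nonpos_of_nonneg hx h]
    exact le_antisymm (le_trans (measure_mono hsub) (le_of_eq expMeasure_Iio_zero))
      zero_le

lemma measurable_gammaPDF : Measurable (gammaPDF 1 1) :=
  ENNReal.measurable_ofReal.comp (measurable_gammaPDFReal 1 1)

lemma keyB {b : ℝ} (hb : 0 < b) :
    ((expMeasure 1).prod (expMeasure 1)) {p : ℝ × ℝ | b^2 ≤ p.1 * p.2} =
      ENNReal.ofReal (∫ x in Ioi (0:ℝ), Real.exp (-(x + b^2/x))) := by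
  haveI : IsProbabilityMeasure (expMeasure 1) := isProbabilityMeasure_expMeasure one_pos
  have hS : MeasurableSet {p : ℝ × ℝ | b^2 ≤ p.1 * p.2} :=
    measurableSet_le measurable_const (measurable_fst.mul measurable_snd)
  rw [Measure.prod_apply hS]
  have hG : Measurable (fun x : ℝ =>
      if 0 < x then ENNReal.ofReal (Real.exp (-(b^2/x))) else 0) := by
    apply Measurable.ite measurableSet_Ioi _ measurable_const
    exact ENNReal.measurable_ofReal.comp ((measurable_const.div measurable_id).neg.exp)
  calc ∫⁻ x, expMeasure 1 (Prod.mk x ⁻¹' {p : ℝ × ℝ | b^2 ≤ p.1 * p.2}) ∂expMeasure 1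
      = ∫⁻ x, (if 0 < x then ENNReal.ofReal (Real.exp (-(b^2/x))) else 0) ∂expMeasure 1 := by
        apply lintegral_congr
        intro x
        exact tail_eq hb x
    _ = ∫⁻ x, gammaPDF 1 1 x *
          (if 0 < x then ENNReal.ofReal (Real.exp (-(b^2/x))) else 0) := by
        rw [expMeasure, gammaMeasure, lintegral_withDensity_eq_lintegral_mul _
          measurable_gammaPDF hG]
        rfl
    _ = ∫⁻ x, (Ioi (0:ℝ)).indicator
          (fun x => ENNReal.ofReal (Real.exp (-(x + b^2/x)))) x := by
        apply lintegral_congr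
        intro x
        by_cases hx : 0 < x
        · rw [indicator_of_mem (mem_Ioi.mpr hx), if_pos hx, gammaPDF_one_one hx.le,
            ← ENNReal.ofReal_mul (Real.exp_pos _).le, ← Real.exp_add]
          congr 2
          ring
        · rw [indicator_of_notMem (by simpa using hx), if_neg hx, mul_zero]
    _ = ∫⁻ x in Ioi (0:ℝ), ENNReal.ofReal (Real.exp (-(x + b^2/x))) := by
        rw [lintegral_indicator measurableSet_Ioi]
    _ = ENNReal.ofReal (∫ x in Ioi (0:ℝ), Real.exp (-(x + b^2/x))) := by
        rw [ofReal_integral_eq_lintegral_ofReal (g_integrableOn hb)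
          (ae_of_all _ fun x => (Real.exp_pos _).le)]

end MeasureSide

end ProdExpAux

theorem product_cdf_integral_formula
    {Ω : Type*} [MeasurableSpace Ω] (μ : Measure Ω) [IsProbabilityMeasure μ]
    (X Y : Ω → ℝ) (hX : Measurable X) (hY : Measurable Y)
    (hXd : μ.map X = expMeasure 1) (hYd : μ.map Y = expMeasure 1)
    (hind : IndepFun X Y μ) (a : ℝ) (ha : 0 < a) :
    μ {ω | X ω * Y ω < a} =
      ENNReal.ofReal
        (1 - a * ∫ s in Set.Ioi (2:ℝ), Real.exp (-(Real.sqrt a * s)) * Real.sqrt (s^2 - 4)) := by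
  open ProdExpAux ProbabilityTheory in
  set b := Real.sqrt a with hbdef
  have hb : 0 < b := Real.sqrt_pos.mpr ha
  have hb2 : b^2 = a := Real.sq_sqrt ha.le
  haveI : IsProbabilityMeasure (expMeasure 1) := isProbabilityMeasure_expMeasure one_pos
  have hpair : μ.map (fun ω => (X ω, Y ω)) = (expMeasure 1).prod (expMeasure 1) := by
    rw [(ProbabilityTheory.indepFun_iff_map_prod_eq_prod_map_map
      hX.aemeasurable hY.aemeasurable).mp hind, hXd, hYd]
  have hSm : MeasurableSet {p : ℝ × ℝ | a ≤ p.1 * p.2} :=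
    measurableSet_le measurable_const (measurable_fst.mul measurable_snd)
  have hmeas : μ {ω | a ≤ X ω * Y ω} =
      ENNReal.ofReal
        (a * ∫ s in Set.Ioi (2:ℝ), Real.exp (-(b * s)) * Real.sqrt (s^2 - 4)) := by
    have h1 : μ {ω | a ≤ X ω * Y ω} =
        ((expMeasure 1).prod (expMeasure 1)) {p : ℝ × ℝ | a ≤ p.1 * p.2} := by
      rw [← hpair, Measure.map_apply (hX.prodMk hY) hSm]
      rfl
    rw [h1, ← hb2, keyB hb, keyA hb]
  have hcompl : {ω | X ω * Y ω < a} = {ω | a ≤ X ω * Y ω}ᶜ := by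
    ext ω; simp [not_le]
  rw [hcompl, measure_compl
    (measurableSet_le measurable_const (hX.mul hY) : MeasurableSet {ω | a ≤ X ω * Y ω}) (measure_ne_top _ _),
    measure_univ, hmeas]
  have hI0 : (0:ℝ) ≤ a * ∫ s in Set.Ioi (2:ℝ), Real.exp (-(b * s)) * Real.sqrt (s^2 - 4) :=
    mul_nonneg ha.le (integral_nonneg fun s =>
      mul_nonneg (Real.exp_pos _).le (Real.sqrt_nonneg _))
  rw [ENNReal.ofReal_sub _ hI0, ENNReal.ofReal_one]
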